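/- Let E ⊆ ℝ be a set with distinct sums of pairs, let λ1, ..., λn ∈ E be pairwise distinct, let c1, ..., cn be complex numbers, and let f(t) = Σ_{j=1}^{n} c_j·e^{i·λ_j·t}. Then limsup_{T→+∞} (1/(2T))·∫_{−T}^{T} |f(t)|⁴ dt ≤ 2·(Σ_{j=1}^{n} |c_j|²)². Consequently, the Besicovitch B⁴-seminorm of f is at most 2^{1/4} times its B²-seminorm. -/

import Mathlib

open Filter Complex ComplexConjugate

private lemma exp_comb (a b t : ℝ) :
    Complex.exp (Complex.I * a * t) * Complex.exp (Complex.I * b * t)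
      = Complex.exp (Complex.I * ((a + b : ℝ)) * t) := by
  rw [← Complex.exp_add]; push_cast; ring_nf

private lemma exp_conj'' (a t : ℝ) :
    conj (Complex.exp (Complex.I * a * t)) = Complex.exp (Complex.I * ((-a : ℝ)) * t) := by
  rw [← Complex.exp_conj]
  congr 1
  simp [Complex.conj_I, Complex.conj_ofReal]

private lemma sum_mul_sum_exp {ι κ : Type*} [Fintype ι] [Fintype κ]
    (a : ι → ℂ) (b : κ → ℂ) (μ : ι → ℝ) (ν : κ → ℝ) (t : ℝ) :
    (∑ i, a i * Complex.exp (Complex.I * μ i * t)) * (∑ k, b k * Complex.exp (Complex.I * ν k * t))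
      = ∑ x : ι × κ, (a x.1 * b x.2) * Complex.exp (Complex.I * ((μ x.1 + ν x.2 : ℝ)) * t) := by
  rw [Finset.sum_mul_sum, Fintype.sum_prod_type]
  refine Finset.sum_congr rfl fun i _ => Finset.sum_congr rfl fun k _ => ?_
  rw [← exp_comb]; ring

private lemma avg_exp (μ : ℝ) :
    Tendsto (fun T : ℝ => ((1/(2*T) : ℝ) : ℂ) * ∫ t in (-T)..T, Complex.exp (Complex.I * μ * t))
      atTop (nhds (if μ = 0 then 1 else 0)) := by
  rcases eq_or_ne μ 0 with h | h
  · subst h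
    simp only [if_pos rfl]
    have key : ∀ᶠ T : ℝ in atTop,
        (1 : ℂ) = ((1/(2*T) : ℝ) : ℂ) * ∫ t in (-T)..T, Complex.exp (Complex.I * (0:ℝ) * t) := by
      filter_upwards [eventually_gt_atTop 0] with T hT
      have hT' : (T:ℂ) ≠ 0 := by exact_mod_cast hT.ne'
      simp only [Complex.ofReal_zero, mul_zero, zero_mul, Complex.exp_zero,
        intervalIntegral.integral_const, sub_neg_eq_add, smul_eq_mul, mul_one]
      push_cast
      field_simp
      rw [Complex.real_smul, mul_one, Complex.ofReal_mul]; push_cast; ring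
    exact Tendsto.congr' key tendsto_const_nhds
  · simp only [if_neg h]
    have hc : (Complex.I * μ) ≠ 0 := by
      simp [Complex.I_ne_zero, Complex.ofReal_eq_zero, h]
    have hb : Tendsto (fun T : ℝ => (1/(2*T)) * (2 / |μ|)) atTop (nhds 0) := by
      have h2T : Tendsto (fun T : ℝ => 2*T) atTop atTop :=
        (tendsto_id (α := ℝ)).const_mul_atTop two_pos
      have := h2T.inv_tendsto_atTop
      simpa [one_div] using this.mul_const (2 / |μ|)
    apply squeeze_zero_norm' _ hb
    filter_upwards [eventually_gt_atTop 0] with T hT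
    have hint : (∫ t in (-T)..T, Complex.exp (Complex.I * μ * t))
        = (Complex.exp (Complex.I * μ * T) - Complex.exp (Complex.I * μ * (-T : ℝ))) / (Complex.I * μ) := by
      simpa using integral_exp_mul_complex hc (a := -T) (b := T)
    have hnorm1 : ∀ s : ℝ, ‖Complex.exp (Complex.I * μ * (s:ℝ))‖ = 1 := by
      intro s
      rw [show Complex.I * (μ:ℂ) * (s:ℂ) = ((μ*s : ℝ):ℂ) * Complex.I by push_cast; ring]
      simpa using Complex.norm_exp_ofReal_mul_I (μ*s)
    rw [hint, norm_mul, norm_div]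
    have h1 : ‖((1/(2*T):ℝ):ℂ)‖ = 1/(2*T) := by
      rw [Complex.norm_real]; exact abs_of_pos (by positivity)
    have h2 : ‖Complex.exp (Complex.I * μ * T) - Complex.exp (Complex.I * μ * (-T:ℝ))‖ ≤ 2 := by
      calc _ ≤ ‖Complex.exp (Complex.I * μ * (T:ℝ))‖ + ‖Complex.exp (Complex.I * μ * (-T:ℝ))‖ := norm_sub_le _ _
      _ = 2 := by rw [hnorm1 T, hnorm1 (-T)]; norm_num
    have h3 : ‖Complex.I * (μ:ℂ)‖ = |μ| := by
      simp [norm_mul]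
    rw [h1, h3]
    gcongr

private lemma avg_sum_exp {ι : Type*} [Fintype ι] (a : ι → ℂ) (μ : ι → ℝ) :
    Tendsto (fun T : ℝ => ((1/(2*T) : ℝ) : ℂ) *
        ∫ t in (-T)..T, ∑ i, a i * Complex.exp (Complex.I * μ i * t))
      atTop (nhds (∑ i, a i * (if μ i = 0 then 1 else 0))) := by
  have hT : ∀ T : ℝ, ((1/(2*T) : ℝ) : ℂ) * ∫ t in (-T)..T, ∑ i, a i * Complex.exp (Complex.I * μ i * t)
      = ∑ i, a i * (((1/(2*T) : ℝ) : ℂ) * ∫ t in (-T)..T, Complex.exp (Complex.I * μ i * t)) := by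
    intro T
    rw [intervalIntegral.integral_finset_sum]
    · rw [Finset.mul_sum]
      refine Finset.sum_congr rfl fun i _ => ?_
      rw [intervalIntegral.integral_const_mul]
      ring
    · intro i _
      apply Continuous.intervalIntegrable
      continuity
  simp only [hT]
  exact tendsto_finset_sum _ fun i _ => (avg_exp (μ i)).const_mul (a i)

/-- A set `E ⊆ ℝ` has distinct sums of pairs. -/
def DistinctSumsOfPairs (E : Set ℝ) : Prop :=
  ∀ l₁ ∈ E, ∀ l₂ ∈ E, ∀ l₃ ∈ E, ∀ l₄ ∈ E,
    l₁ + l₂ = l₃ + l₄ → (l₁ = l₃ ∧ l₂ = l₄) ∨ (l₁ = l₄ ∧ l₂ = l₃)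

/-- The Besicovitch `B^p`-seminorm of `f : ℝ → ℂ`. -/
noncomputable def besicovitchSeminorm (p : ℝ) (f : ℝ → ℂ) : ℝ :=
  Filter.limsup
    (fun T : ℝ => ((1 / (2 * T)) * ∫ t in (-T)..T, ‖f t‖ ^ p) ^ (1 / p))
    Filter.atTop

theorem dsp_B4_estimate (E : Set ℝ) (hE : DistinctSumsOfPairs E)
    (n : ℕ) (l : Fin n → ℝ) (hl : Function.Injective l) (hlE : ∀ j, l j ∈ E)
    (c : Fin n → ℂ) (f : ℝ → ℂ)
    (hf : ∀ t : ℝ, f t = ∑ j : Fin n, c j * Complex.exp (Complex.I * (l j : ℂ) * t)) :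
    Filter.limsup
      (fun T : ℝ => (1 / (2 * T)) * ∫ t in (-T)..T, ‖f t‖ ^ 4)
      Filter.atTop ≤ 2 * (∑ j : Fin n, ‖c j‖ ^ 2) ^ 2 ∧
    besicovitchSeminorm 4 f ≤ 2 ^ ((1 : ℝ) / 4) * besicovitchSeminorm 2 f := by
  classical
  set M : ℝ := ∑ j : Fin n, ‖c j‖ ^ 2 with hMdef
  have hM0 : 0 ≤ M := Finset.sum_nonneg fun j _ => by positivity
  set A : (Fin n × Fin n) × (Fin n × Fin n) → ℂ :=
    fun x => (c x.1.1 * c x.1.2) * conj (c x.2.1 * c x.2.2) with hAdef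
  set μQ : (Fin n × Fin n) × (Fin n × Fin n) → ℝ :=
    fun x => (l x.1.1 + l x.1.2) + -(l x.2.1 + l x.2.2) with hmudef
  -- squares expansion
  have hsq : ∀ t : ℝ, (f t)^2
      = ∑ x : Fin n × Fin n, (c x.1 * c x.2) * Complex.exp (Complex.I * ((l x.1 + l x.2 : ℝ)) * t) := by
    intro t
    rw [pow_two, hf t]
    exact sum_mul_sum_exp c c l l t
  have hconjsq : ∀ t : ℝ, conj ((f t)^2)
      = ∑ x : Fin n × Fin n, conj (c x.1 * c x.2) * Complex.exp (Complex.I * ((-(l x.1 + l x.2) : ℝ)) * t) := by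
    intro t
    rw [hsq t, map_sum]
    exact Finset.sum_congr rfl fun x _ => by rw [map_mul, exp_conj'']
  have hquad : ∀ t : ℝ, ((‖f t‖^4 : ℝ) : ℂ)
      = ∑ x : (Fin n × Fin n) × (Fin n × Fin n), A x * Complex.exp (Complex.I * (μQ x : ℝ) * t) := by
    intro t
    have h1 : ((‖f t‖^4 : ℝ) : ℂ) = (f t)^2 * conj ((f t)^2) := by
      rw [Complex.mul_conj]
      norm_cast
      rw [Complex.normSq_eq_norm_sq]
      rw [norm_pow]
      ring
    rw [h1, hconjsq t, hsq t]
    exact sum_mul_sum_exp _ _ _ _ t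
  -- convergence of the 4th power average
  set S : ℂ := ∑ x : (Fin n × Fin n) × (Fin n × Fin n), A x * (if μQ x = 0 then 1 else 0) with hSdef
  have havgC := avg_sum_exp A μQ
  have heqT : ∀ T : ℝ, ((1/(2*T) : ℝ) : ℂ) *
      (∫ t in (-T)..T, ∑ x : (Fin n × Fin n) × (Fin n × Fin n), A x * Complex.exp (Complex.I * (μQ x : ℝ) * t))
      = (((1/(2*T)) * ∫ t in (-T)..T, ‖f t‖^4 : ℝ) : ℂ) := by
    intro T
    have : (∫ t in (-T)..T, ∑ x : (Fin n × Fin n) × (Fin n × Fin n), A x * Complex.exp (Complex.I * (μQ x : ℝ) * t))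
        = ∫ t in (-T)..T, ((‖f t‖^4 : ℝ) : ℂ) := by
      apply intervalIntegral.integral_congr
      intro u _
      exact (hquad u).symm
    rw [this, intervalIntegral.integral_ofReal]
    push_cast
    ring
  have hr4 : Tendsto (fun T : ℝ => (1/(2*T)) * ∫ t in (-T)..T, ‖f t‖^4) atTop (nhds S.re) := by
    have h2 : Tendsto (fun T : ℝ => (((1/(2*T)) * ∫ t in (-T)..T, ‖f t‖^4 : ℝ) : ℂ)) atTop (nhds S) := by
      refine havgC.congr fun T => heqT T
    have h3 := (Complex.continuous_re.tendsto S).comp h2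
    exact h3.congr fun T => by simp [Function.comp]
  -- the bound on S.re
  have hSre : S.re ≤ 2 * M^2 := by
    have hre : S.re = ∑ x : (Fin n × Fin n) × (Fin n × Fin n), (A x * (if μQ x = 0 then 1 else 0)).re := by
      rw [hSdef, Complex.re_sum]
    set w : (Fin n × Fin n) × (Fin n × Fin n) → ℝ := fun x =>
      (if x.2 = x.1 then ‖c x.1.1‖^2 * ‖c x.1.2‖^2 else 0)
        + (if x.2 = (x.1.2, x.1.1) then ‖c x.1.1‖^2 * ‖c x.1.2‖^2 else 0) with hwdef
    have hterm : ∀ x : (Fin n × Fin n) × (Fin n × Fin n),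
        (A x * (if μQ x = 0 then 1 else 0)).re ≤ w x := by
      rintro ⟨⟨j, k⟩, ⟨p, q⟩⟩
      by_cases hx : μQ ((j,k),(p,q)) = 0
      · rw [if_pos hx, mul_one]
        have hsum : l j + l k = l p + l q := by
          have := hx
          simp only [hmudef] at this
          linarith
        have haux : ∀ u v : Fin n, ((c u * c v) * conj (c u * c v)).re = ‖c u‖^2 * ‖c v‖^2 := by
          intro u v
          have hns : Complex.normSq (c u * c v) = ‖c u‖^2 * ‖c v‖^2 := by
            rw [Complex.normSq_eq_norm_sq, norm_mul, mul_pow]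
          rw [Complex.mul_conj, hns, Complex.ofReal_re]
        rcases hE _ (hlE j) _ (hlE k) _ (hlE p) _ (hlE q) hsum with ⟨h1, h2⟩ | ⟨h1, h2⟩
        · have hjp : j = p := hl h1
          have hkq : k = q := hl h2
          subst hjp; subst hkq
          simp only [hwdef, hAdef, if_true]
          rw [haux j k]
          have : (0:ℝ) ≤ (if ((j,k) : Fin n × Fin n) = (k, j) then ‖c j‖^2 * ‖c k‖^2 else 0) := by
            split <;> positivity
          linarith
        · have hjq : j = q := hl h1
          have hkp : k = p := hl h2
          subst hjq; subst hkp
          have haux2 : ((c j * c k) * conj (c k * c j)).re = ‖c j‖^2 * ‖c k‖^2 := by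
            rw [mul_comm (c k) (c j)]
            exact haux j k
          simp only [hwdef, hAdef, if_true]
          rw [haux2]
          have : (0:ℝ) ≤ (if ((k,j) : Fin n × Fin n) = (j, k) then ‖c j‖^2 * ‖c k‖^2 else 0) := by
            split <;> positivity
          linarith
      · rw [if_neg hx, mul_zero]
        simp only [hwdef, Complex.zero_re]
        apply add_nonneg <;> (split <;> positivity)
    have hsumw : ∑ x : (Fin n × Fin n) × (Fin n × Fin n), w x = 2 * M^2 := by
      have hM2 : M^2 = ∑ p : Fin n × Fin n, ‖c p.1‖^2 * ‖c p.2‖^2 := by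
        rw [hMdef, pow_two, Finset.sum_mul_sum, Fintype.sum_prod_type]
      rw [hwdef, Fintype.sum_prod_type]
      simp only [Finset.sum_add_distrib, Finset.sum_ite_eq', Finset.mem_univ, if_pos]
      rw [hM2]
      rw [← Finset.sum_add_distrib]
      rw [Finset.mul_sum]
      refine Finset.sum_congr rfl fun p _ => ?_
      ring
    calc S.re = ∑ x, (A x * (if μQ x = 0 then 1 else 0)).re := hre
      _ ≤ ∑ x, w x := Finset.sum_le_sum fun x _ => hterm x
      _ = 2 * M^2 := hsumw
  have hlimsup4 : Filter.limsup (fun T : ℝ => (1/(2*T)) * ∫ t in (-T)..T, ‖f t‖^4) atTop = S.re :=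
    hr4.limsup_eq
  constructor
  · rw [show (fun T : ℝ => (1 / (2 * T)) * ∫ t in (-T)..T, ‖f t‖ ^ 4)
        = (fun T : ℝ => (1/(2*T)) * ∫ t in (-T)..T, ‖f t‖^4) from rfl, hlimsup4]
    exact hSre
  · -- second part
    have hL0 : 0 ≤ S.re := by
      refine ge_of_tendsto hr4 ?_
      filter_upwards [eventually_gt_atTop 0] with T hT
      exact mul_nonneg (by positivity)
        (intervalIntegral.integral_nonneg (by linarith) (fun u _ => by positivity))
    -- B2 analysis
    have hconjf : ∀ t : ℝ, conj (f t)
        = ∑ j : Fin n, conj (c j) * Complex.exp (Complex.I * ((-(l j) : ℝ)) * t) := by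
      intro t
      rw [hf t, map_sum]
      exact Finset.sum_congr rfl fun j _ => by rw [map_mul, exp_conj'']
    set A2 : Fin n × Fin n → ℂ := fun x => c x.1 * conj (c x.2) with hA2def
    set μ2 : Fin n × Fin n → ℝ := fun x => l x.1 + -(l x.2) with hmu2def
    have hpair : ∀ t : ℝ, ((‖f t‖^2 : ℝ) : ℂ)
        = ∑ x : Fin n × Fin n, A2 x * Complex.exp (Complex.I * (μ2 x : ℝ) * t) := by
      intro t
      have hns : Complex.normSq (f t) = ‖f t‖^2 := by
        rw [Complex.normSq_eq_norm_sq]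
      have h1 : ((‖f t‖^2 : ℝ) : ℂ) = f t * conj (f t) := by
        rw [Complex.mul_conj, hns]
      rw [h1, hconjf t, hf t]
      exact sum_mul_sum_exp _ _ _ _ t
    have havg2C := avg_sum_exp A2 μ2
    have hS2 : (∑ x : Fin n × Fin n, A2 x * (if μ2 x = 0 then 1 else 0)) = (M : ℂ) := by
      have hterm2 : ∀ x : Fin n × Fin n,
          A2 x * (if μ2 x = 0 then 1 else 0) = if x.2 = x.1 then ((‖c x.1‖^2 : ℝ) : ℂ) else 0 := by
        rintro ⟨a, b⟩
        by_cases hab : b = a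
        · subst hab
          have hμ : μ2 (b, b) = 0 := by simp [hmu2def]
          have hns : Complex.normSq (c b) = ‖c b‖^2 := by
            rw [Complex.normSq_eq_norm_sq]
          simp only [hμ, if_pos rfl, mul_one, hA2def, if_true]
          rw [Complex.mul_conj, hns]
        · have hμ : μ2 (a, b) ≠ 0 := by
            intro h
            apply hab
            have : l a = l b := by simp only [hmu2def] at h; linarith
            exact (hl this).symm
          simp [hμ, hab]
      rw [Finset.sum_congr rfl fun x _ => hterm2 x, Fintype.sum_prod_type]
      simp only [Finset.sum_ite_eq', Finset.mem_univ, if_true]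
      rw [hMdef]
      push_cast
      rfl
    rw [hS2] at havg2C
    have heqT2 : ∀ T : ℝ, ((1/(2*T) : ℝ) : ℂ) *
        (∫ t in (-T)..T, ∑ x : Fin n × Fin n, A2 x * Complex.exp (Complex.I * (μ2 x : ℝ) * t))
        = (((1/(2*T)) * ∫ t in (-T)..T, ‖f t‖^2 : ℝ) : ℂ) := by
      intro T
      have : (∫ t in (-T)..T, ∑ x : Fin n × Fin n, A2 x * Complex.exp (Complex.I * (μ2 x : ℝ) * t))
          = ∫ t in (-T)..T, ((‖f t‖^2 : ℝ) : ℂ) := by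
        apply intervalIntegral.integral_congr
        intro u _
        exact (hpair u).symm
      rw [this, intervalIntegral.integral_ofReal]
      push_cast
      ring
    have hr2 : Tendsto (fun T : ℝ => (1/(2*T)) * ∫ t in (-T)..T, ‖f t‖^2) atTop (nhds M) := by
      have h2 : Tendsto (fun T : ℝ => (((1/(2*T)) * ∫ t in (-T)..T, ‖f t‖^2 : ℝ) : ℂ)) atTop (nhds (M:ℂ)) :=
        havg2C.congr fun T => heqT2 T
      have h3 := (Complex.continuous_re.tendsto (M:ℂ)).comp h2
      have h4 : Tendsto (fun T : ℝ => (1/(2*T)) * ∫ t in (-T)..T, ‖f t‖^2) atTop (nhds ((M:ℂ)).re) :=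
        h3.congr fun T => by simp [Function.comp]
      simpa using h4
    -- identify the seminorms
    have hB4 : besicovitchSeminorm 4 f = S.re ^ ((1:ℝ)/4) := by
      unfold besicovitchSeminorm
      have ht := hr4.rpow_const (p := (1:ℝ)/4) (Or.inr (by norm_num))
      refine Tendsto.limsup_eq (ht.congr fun T => ?_)
      congr 2
      refine intervalIntegral.integral_congr fun u _ => ?_
      rw [show ((4:ℝ)) = ((4:ℕ) : ℝ) by norm_num, Real.rpow_natCast]
    have hB2 : besicovitchSeminorm 2 f = M ^ ((1:ℝ)/2) := by
      unfold besicovitchSeminorm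
      have ht := hr2.rpow_const (p := (1:ℝ)/2) (Or.inr (by norm_num))
      refine Tendsto.limsup_eq (ht.congr fun T => ?_)
      congr 2
      refine intervalIntegral.integral_congr fun u _ => ?_
      rw [show ((2:ℝ)) = ((2:ℕ) : ℝ) by norm_num, Real.rpow_natCast]
    rw [hB4, hB2]
    calc S.re ^ ((1:ℝ)/4) ≤ (2 * M^2) ^ ((1:ℝ)/4) :=
          Real.rpow_le_rpow hL0 hSre (by norm_num)
      _ = 2 ^ ((1:ℝ)/4) * (M^2) ^ ((1:ℝ)/4) := Real.mul_rpow (by norm_num) (sq_nonneg M)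
      _ = 2 ^ ((1:ℝ)/4) * M ^ ((1:ℝ)/2) := by
          congr 1
          rw [← Real.rpow_natCast M 2, ← Real.rpow_mul hM0]
          norm_num
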